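/- Let ν be a finite signed (if 𝔽 = ℝ) or complex (if 𝔽 = ℂ) Radon measure on K × B_{E*} satisfying ‖T*ν‖ = ‖ν‖. Then ν is carried by K × S_{E*}; that is, |ν|( K × (B_{E*} \ S_{E*}) ) = 0. -/

import Mathlib

open MeasureTheory
open scoped ENNReal

noncomputable section

/-- The closed unit ball of the dual of `E`, equipped with the weak* topology. -/
abbrev DualBall (𝕜 E : Type*) [RCLike 𝕜] [NormedAddCommGroup E] [NormedSpace 𝕜 E] :=
  {φ : WeakDual 𝕜 E // ‖WeakDual.toStrongDual φ‖ ≤ 1}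

/-- The Borel σ-algebra on `K × B_{E*}`. -/
instance (priority := 1100) prodBallBorelMeasurableSpace (K : Type*) [TopologicalSpace K]
    (𝕜 E : Type*) [RCLike 𝕜] [NormedAddCommGroup E] [NormedSpace 𝕜 E] :
    MeasurableSpace (K × DualBall 𝕜 E) := borel _

instance (K : Type*) [TopologicalSpace K]
    (𝕜 E : Type*) [RCLike 𝕜] [NormedAddCommGroup E] [NormedSpace 𝕜 E] :
    BorelSpace (K × DualBall 𝕜 E) := ⟨rfl⟩

section aux
variable (K : Type*) [TopologicalSpace K]
    (𝕜 E : Type*) [RCLike 𝕜] [NormedAddCommGroup E] [NormedSpace 𝕜 E]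

-- evaluation at a fixed vector is continuous
lemma aux_eval_cont (x : E) :
    Continuous fun p : K × DualBall 𝕜 E => (p.2.1 : WeakDual 𝕜 E) x :=
  (WeakDual.eval_continuous x).comp (continuous_subtype_val.comp continuous_snd)

-- the norm function is measurable (lower semicontinuous)
lemma aux_norm_meas :
    Measurable fun p : K × DualBall 𝕜 E => ‖WeakDual.toStrongDual p.2.1‖ := by
  apply measurable_of_Ioi
  intro c
  have : (fun p : K × DualBall 𝕜 E => ‖WeakDual.toStrongDual p.2.1‖) ⁻¹' Set.Ioi c
      = ⋃ x ∈ Metric.closedBall (0 : E) 1,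
        {p : K × DualBall 𝕜 E | c < ‖(p.2.1 : WeakDual 𝕜 E) x‖} := by
    ext p
    simp only [Set.mem_preimage, Set.mem_Ioi, Set.mem_iUnion, Set.mem_setOf_eq,
      Metric.mem_closedBall, dist_zero_right]
    constructor
    · intro h
      obtain ⟨x, hx, hx2⟩ := (WeakDual.toStrongDual p.2.1).exists_lt_apply_of_lt_opNorm h
      exact ⟨x, hx.le, hx2⟩
    · rintro ⟨x, hx, hx2⟩
      calc c < ‖(WeakDual.toStrongDual p.2.1) x‖ := hx2
        _ ≤ ‖WeakDual.toStrongDual p.2.1‖ * ‖x‖ := (WeakDual.toStrongDual p.2.1).le_opNorm x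
        _ ≤ ‖WeakDual.toStrongDual p.2.1‖ * 1 :=
            mul_le_mul_of_nonneg_left hx (norm_nonneg _)
        _ = _ := mul_one _
  rw [this]
  exact (isOpen_biUnion fun x _ =>
    isOpen_lt continuous_const (aux_eval_cont K 𝕜 E x).norm).measurableSet

-- joint continuity of the evaluation with a continuous f
lemma aux_joint_cont [CompactSpace K] (f : C(K, E)) :
    Continuous fun p : K × DualBall 𝕜 E => (p.2.1 : WeakDual 𝕜 E) (f p.1) := by
  rw [continuous_iff_continuousAt]
  rintro ⟨t₀, φ₀⟩
  have h1 : Filter.Tendsto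
      (fun p : K × DualBall 𝕜 E => (p.2.1 : WeakDual 𝕜 E) (f p.1) - (p.2.1 : WeakDual 𝕜 E) (f t₀))
      (nhds (t₀, φ₀)) (nhds 0) := by
    apply squeeze_zero_norm (a := fun p : K × DualBall 𝕜 E => ‖f p.1 - f t₀‖)
    · intro p
      calc ‖(p.2.1 : WeakDual 𝕜 E) (f p.1) - (p.2.1 : WeakDual 𝕜 E) (f t₀)‖
          = ‖(WeakDual.toStrongDual p.2.1) (f p.1 - f t₀)‖ := by
            rw [map_sub]; rfl
        _ ≤ ‖WeakDual.toStrongDual p.2.1‖ * ‖f p.1 - f t₀‖ :=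
            (WeakDual.toStrongDual p.2.1).le_opNorm _
        _ ≤ 1 * ‖f p.1 - f t₀‖ := mul_le_mul_of_nonneg_right p.2.2 (norm_nonneg _)
        _ = ‖f p.1 - f t₀‖ := one_mul _
    · have : Continuous fun p : K × DualBall 𝕜 E => ‖f p.1 - f t₀‖ :=
        ((f.continuous.comp continuous_fst).sub continuous_const).norm
      have h := this.tendsto (t₀, φ₀)
      simpa using h
  have h2 : Filter.Tendsto (fun p : K × DualBall 𝕜 E => (p.2.1 : WeakDual 𝕜 E) (f t₀))
      (nhds (t₀, φ₀)) (nhds ((φ₀ : WeakDual 𝕜 E) (f t₀))) :=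
    (aux_eval_cont K 𝕜 E (f t₀)).tendsto (t₀, φ₀)
  have := h1.add h2
  simp only [sub_add_cancel, zero_add] at this
  exact this

end aux

/-- A finite signed/complex Radon measure `ν` on `K × B_{E*}` (represented by
its total variation `τ = |ν|` and a Borel density `ρ` of modulus one, so that
`∫ g dν = ∫ g·ρ dτ`) satisfying `‖T*ν‖ = ‖ν‖` is carried by `K × S_{E*}`. -/
theorem carried_by_sphere_of_norm_eq
    (K : Type*) [TopologicalSpace K] [CompactSpace K] [T2Space K]
    [MeasurableSpace K] [BorelSpace K]
    (𝕜 E : Type*) [RCLike 𝕜] [NormedAddCommGroup E] [NormedSpace 𝕜 E] [CompleteSpace E]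
    (τ : Measure (K × DualBall 𝕜 E)) [IsFiniteMeasure τ] [τ.Regular]
    (ρ : K × DualBall 𝕜 E → 𝕜) (hρmeas : Measurable ρ) (hρone : ∀ p, ‖ρ p‖ = 1)
    (hnorm : sSup {r : ℝ | ∃ f : C(K, E), ‖f‖ ≤ 1 ∧
        r = ‖∫ p, (p.2.1 (f p.1)) * ρ p ∂τ‖} = (τ Set.univ).toReal) :
    τ {p : K × DualBall 𝕜 E | ‖WeakDual.toStrongDual p.2.1‖ < 1} = 0 := by
  set g : K × DualBall 𝕜 E → ℝ := fun p => ‖WeakDual.toStrongDual p.2.1‖ with hgdef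
  have hgmeas : Measurable g := aux_norm_meas K 𝕜 E
  have hgle : ∀ p, g p ≤ 1 := fun p => p.2.2
  have hg0 : ∀ p, 0 ≤ g p := fun p => norm_nonneg _
  have hgint : Integrable g τ := by
    refine Integrable.mono' (integrable_const (1 : ℝ)) hgmeas.aestronglyMeasurable ?_
    exact Filter.Eventually.of_forall fun p => by
      rw [Real.norm_eq_abs, abs_of_nonneg (hg0 p)]; exact hgle p
  have hbound : ∀ r ∈ {r : ℝ | ∃ f : C(K, E), ‖f‖ ≤ 1 ∧
      r = ‖∫ p, (p.2.1 (f p.1)) * ρ p ∂τ‖}, r ≤ ∫ p, g p ∂τ := by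
    rintro r ⟨f, hf, rfl⟩
    have hcont := aux_joint_cont K 𝕜 E f
    have hmeas : Measurable fun p : K × DualBall 𝕜 E => (p.2.1 (f p.1)) * ρ p :=
      hcont.measurable.mul hρmeas
    have hptw : ∀ p : K × DualBall 𝕜 E, ‖(p.2.1 (f p.1)) * ρ p‖ ≤ g p := by
      intro p
      rw [norm_mul, hρone p, mul_one]
      calc ‖p.2.1 (f p.1)‖ = ‖(WeakDual.toStrongDual p.2.1) (f p.1)‖ := rfl
        _ ≤ ‖WeakDual.toStrongDual p.2.1‖ * ‖f p.1‖ :=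
            (WeakDual.toStrongDual p.2.1).le_opNorm _
        _ ≤ g p * 1 :=
            mul_le_mul_of_nonneg_left ((f.norm_coe_le_norm p.1).trans hf) (hg0 p)
        _ = g p := mul_one _
    have hint : Integrable (fun p : K × DualBall 𝕜 E => (p.2.1 (f p.1)) * ρ p) τ :=
      Integrable.mono' hgint hmeas.aestronglyMeasurable (Filter.Eventually.of_forall hptw)
    calc ‖∫ p, (p.2.1 (f p.1)) * ρ p ∂τ‖
        ≤ ∫ p, ‖(p.2.1 (f p.1)) * ρ p‖ ∂τ := norm_integral_le_integral_norm _
      _ ≤ ∫ p, g p ∂τ := integral_mono hint.norm hgint hptw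
  have h1 : (τ Set.univ).toReal ≤ ∫ p, g p ∂τ := by
    rw [← hnorm]; exact Real.sSup_le hbound (integral_nonneg hg0)
  have h2 : ∫ p, g p ∂τ ≤ (τ Set.univ).toReal := by
    calc ∫ p, g p ∂τ ≤ ∫ _p, (1 : ℝ) ∂τ := integral_mono hgint (integrable_const 1) hgle
      _ = (τ Set.univ).toReal := by simp [integral_const, Measure.real]
  have heq : ∫ p, ((1 : ℝ) - g p) ∂τ = 0 := by
    rw [integral_sub (integrable_const (1 : ℝ)) hgint]
    simp only [integral_const, smul_eq_mul, mul_one, Measure.real]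
    linarith [le_antisymm h2 h1]
  have hae : (fun p => (1 : ℝ) - g p) =ᵐ[τ] 0 :=
    (integral_eq_zero_iff_of_nonneg (fun p => sub_nonneg.mpr (hgle p))
      ((integrable_const 1).sub hgint)).mp heq
  have hnull : τ {p : K × DualBall 𝕜 E | ¬ ((1 : ℝ) - g p = 0)} = 0 := by
    have := hae
    rw [Filter.EventuallyEq, Filter.eventually_iff, mem_ae_iff] at this
    simpa [Set.compl_setOf] using this
  refine measure_mono_null ?_ hnull
  intro p hp
  simp only [Set.mem_setOf_eq] at hp ⊢
  intro h
  have hgp : g p = 1 := by linarith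
  have : g p < 1 := hp
  rw [hgp] at this
  exact lt_irrefl 1 this
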